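/- arXiv:2212.02596 — 4 statements merged into one kernel-verified Lean document; each statement's English description precedes it below -/
import Mathlib

section
/- Let X be a real Banach space with topological dual X*, and let T : X ⇉ X* be a set-valued operator, identified with its graph in X × X*. If T is monotone and the zero functional 0 ∈ X* belongs to T(x) for every x in the domain of T, then T is contained in the normal cone operator N_C of the set C = cl conv (dom T), the closed convex hull of the domain of T; that is, for every (x, x*) in the graph of T, x ∈ C and ⟨y − x, x*⟩ ≤ 0 for all y ∈ C. -/
open Set

noncomputable section

variable {X : Type*} [NormedAddCommGroup X] [NormedSpace ℝ X]

/-- Monotonicity of a set-valued operator `T : X ⇉ X*`, identified with its graph. -/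
def MonotoneGraph (T : Set (X × (X →L[ℝ] ℝ))) : Prop :=
  ∀ p ∈ T, ∀ q ∈ T, 0 ≤ (p.2 - q.2) (p.1 - q.1)

/-- Maximal monotonicity: monotone and not properly contained in any monotone graph. -/
def MaximalMonotoneGraph (T : Set (X × (X →L[ℝ] ℝ))) : Prop :=
  MonotoneGraph T ∧ ∀ S : Set (X × (X →L[ℝ] ℝ)), MonotoneGraph S → T ⊆ S → S = T

/-- Domain of a set-valued operator given by its graph. -/
def graphDom (T : Set (X × (X →L[ℝ] ℝ))) : Set X := {x | ∃ u, (x, u) ∈ T}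

/-- Range of a set-valued operator given by its graph. -/
def graphRange (T : Set (X × (X →L[ℝ] ℝ))) : Set (X →L[ℝ] ℝ) := {u | ∃ x, (x, u) ∈ T}

/-- The normal cone operator `N_C : X ⇉ X*` of a set `C ⊆ X`, as a graph. -/
def normalConeGraph (C : Set X) : Set (X × (X →L[ℝ] ℝ)) :=
  {p | p.1 ∈ C ∧ ∀ y ∈ C, p.2 (y - p.1) ≤ 0}

/-- The Fenchel subdifferential operator `∂f : X ⇉ X*` of `f : X → ℝ ∪ {+∞}`, as a graph. -/
def subdiffGraph (f : X → EReal) : Set (X × (X →L[ℝ] ℝ)) :=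
  {p | ∀ y : X, f p.1 + ((p.2 (y - p.1) : ℝ) : EReal) ≤ f y}

/-- `f` is proper: never `−∞` and not identically `+∞`. -/
def ProperFn (f : X → EReal) : Prop := (∀ x, f x ≠ ⊥) ∧ ∃ x, f x ≠ ⊤

/-- Convexity of an extended-real-valued functional. -/
def ConvexFn (f : X → EReal) : Prop :=
  ∀ x y : X, ∀ t : ℝ, 0 ≤ t → t ≤ 1 →
    f (t • x + (1 - t) • y) ≤ (t : EReal) * f x + ((1 - t : ℝ) : EReal) * f y

/-- Positive homogeneity: `f (c • x) = c * f x` for `c ≥ 0` and `f x` finite. -/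
def PosHomFn (f : X → EReal) : Prop :=
  ∀ x : X, f x ≠ ⊤ → ∀ c : ℝ, 0 ≤ c → f (c • x) = (c : EReal) * f x

/-- The epigraph of `f : X → ℝ ∪ {+∞}`. -/
def Epi (f : X → EReal) : Set (X × ℝ) := {p | f p.1 ≤ (p.2 : EReal)}

/-- Duality pairing between `X × ℝ` and `X* × ℝ`. -/
def pairXR (p : X × ℝ) (q : (X →L[ℝ] ℝ) × ℝ) : ℝ := q.1 p.1 + p.2 * q.2

/-- Monotonicity of an operator `A : X × ℝ ⇉ X* × ℝ`, identified with its graph. -/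
def MonotoneGraphXR (A : Set ((X × ℝ) × ((X →L[ℝ] ℝ) × ℝ))) : Prop :=
  ∀ p ∈ A, ∀ q ∈ A, 0 ≤ pairXR (p.1 - q.1) (p.2 - q.2)

/-- Domain of an operator `A : X × ℝ ⇉ X* × ℝ`. -/
def graphDomXR (A : Set ((X × ℝ) × ((X →L[ℝ] ℝ) × ℝ))) : Set (X × ℝ) :=
  {c | ∃ u, (c, u) ∈ A}

/-- The normal cone operator of a subset of `X × ℝ`, as a graph. -/
def normalConeGraphXR (C : Set (X × ℝ)) : Set ((X × ℝ) × ((X →L[ℝ] ℝ) × ℝ)) :=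
  {p | p.1 ∈ C ∧ ∀ d ∈ C, pairXR (d - p.1) p.2 ≤ 0}

/-- The operator `A_X : X ⇉ X*` induced by `A : X × ℝ ⇉ X* × ℝ`. -/
def inducedGraph (A : Set ((X × ℝ) × ((X →L[ℝ] ℝ) × ℝ))) : Set (X × (X →L[ℝ] ℝ)) :=
  {p | ∃ lam : ℝ, ((p.1, lam), (p.2, (-1 : ℝ))) ∈ A}

/-- `d` belongs to the recession cone of `C`, i.e. `C + ℝ₊ d = C` (as a set equality). -/
def recessionEq {Y : Type*} [AddCommGroup Y] [Module ℝ Y] (C : Set Y) (d : Y) : Prop :=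
  {y | ∃ c ∈ C, ∃ t : ℝ, 0 ≤ t ∧ y = c + t • d} = C
/-- a monotone operator containing the zero functional at every point of
its domain is contained in the normal cone operator of the closed convex hull of its domain. -/
theorem monotone_zero_subset_normalCone
    {X : Type*} [NormedAddCommGroup X] [NormedSpace ℝ X] [CompleteSpace X]
    (T : Set (X × (X →L[ℝ] ℝ)))
    (hmono : MonotoneGraph T)
    (h0 : ∀ x ∈ graphDom T, (x, (0 : X →L[ℝ] ℝ)) ∈ T) :
    T ⊆ normalConeGraph (closure (convexHull ℝ (graphDom T))) := by
  rintro ⟨x, u⟩ hxu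
  have hxdom : x ∈ graphDom T := ⟨u, hxu⟩
  constructor
  · exact subset_closure (subset_convexHull ℝ _ hxdom)
  · intro y hy
    have hS : graphDom T ⊆ {z | u z ≤ u x} := by
      intro z hz
      have := hmono (x, u) hxu (z, 0) (h0 z hz)
      simp only [ContinuousLinearMap.sub_apply, ContinuousLinearMap.zero_apply, sub_zero] at this
      have h2 : 0 ≤ u x - u z := by simpa [map_sub] using this
      show u z ≤ u x
      linarith
    have hconv : Convex ℝ {z : X | u z ≤ u x} := convex_halfSpace_le ⟨u.map_add, u.map_smul⟩ _
    have hcl : IsClosed {z : X | u z ≤ u x} := isClosed_le u.continuous continuous_const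
    have hsub : closure (convexHull ℝ (graphDom T)) ⊆ {z | u z ≤ u x} :=
      closure_minimal (convexHull_min hS hconv) hcl
    have := hsub hy
    simp only [Set.mem_setOf_eq] at this
    simp [map_sub]; linarith
end
end

section
/- Let X be a real Banach space with topological dual X*, and let T : X ⇉ X* be a set-valued operator identified with its graph. If T is monotone and its range equals T(0_X) (the value of T at the zero vector of X), then T is contained in the subdifferential of the functional g : X → ℝ ∪ {+∞} defined by g(x) := sup{⟨x, x*⟩ : x* ∈ cl conv T(0_X)}, the restriction to X of the support functional of the closed convex hull of T(0_X); that is, for every (x, x*) in the graph of T, g(y) ≥ g(x) + ⟨y − x, x*⟩ for all y ∈ X. -/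
open Set

noncomputable section

variable {X : Type*} [NormedAddCommGroup X] [NormedSpace ℝ X]

/-- a monotone operator whose range equals its value at `0` is contained
in the subdifferential of the support functional of the closed convex hull of `T(0)`. -/
theorem monotone_rangeEqAtZero_subset_subdiff_support
    {X : Type*} [NormedAddCommGroup X] [NormedSpace ℝ X] [CompleteSpace X]
    (T : Set (X × (X →L[ℝ] ℝ)))
    (hmono : MonotoneGraph T)
    (hrange : graphRange T = {u : X →L[ℝ] ℝ | ((0 : X), u) ∈ T}) :
    T ⊆ subdiffGraph (fun x : X =>
      sSup ((fun u : X →L[ℝ] ℝ => ((u x : ℝ) : EReal)) ''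
        closure (convexHull ℝ {u : X →L[ℝ] ℝ | ((0 : X), u) ∈ T}))) := by
  set T0 : Set (X →L[ℝ] ℝ) := {u : X →L[ℝ] ℝ | ((0 : X), u) ∈ T} with hT0
  rintro ⟨x, xs⟩ hxT
  intro y
  -- x* ∈ T(0)
  have hxs0 : xs ∈ T0 := by
    rw [← hrange]; exact ⟨x, hxT⟩
  have hxsS : xs ∈ closure (convexHull ℝ T0) :=
    subset_closure (subset_convexHull ℝ _ hxs0)
  -- every u in cl conv T0 satisfies u x ≤ xs x
  have hkey : ∀ u ∈ closure (convexHull ℝ T0), u x ≤ xs x := by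
    have hsub : closure (convexHull ℝ T0) ⊆ {u : X →L[ℝ] ℝ | u x ≤ xs x} := by
      apply closure_minimal
      · apply convexHull_min
        · intro u hu
          have h := hmono (x, xs) hxT ((0 : X), u) hu
          simpa [sub_nonneg] using h
        · exact convex_halfSpace_le
            ⟨fun a b => by simp, fun c a => by simp⟩ (xs x)
      · exact isClosed_le ((ContinuousLinearMap.apply ℝ ℝ x).continuous) continuous_const
    exact fun u hu => hsub hu
  -- sup at x equals xs x
  have hx : sSup ((fun u : X →L[ℝ] ℝ => ((u x : ℝ) : EReal)) ''
      closure (convexHull ℝ T0)) = ((xs x : ℝ) : EReal) := by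
    apply le_antisymm
    · apply sSup_le
      rintro a ⟨u, hu, rfl⟩
      simpa using EReal.coe_le_coe_iff.mpr (hkey u hu)
    · exact le_sSup ⟨xs, hxsS, rfl⟩
  have hy : ((xs y : ℝ) : EReal) ≤ sSup ((fun u : X →L[ℝ] ℝ => ((u y : ℝ) : EReal)) ''
      closure (convexHull ℝ T0)) := le_sSup ⟨xs, hxsS, rfl⟩
  simp only [hx]
  calc ((xs x : ℝ) : EReal) + ((xs (y - x) : ℝ) : EReal)
      = ((xs y : ℝ) : EReal) := by
        rw [← EReal.coe_add]; norm_cast; simp [map_sub]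
    _ ≤ _ := hy
end
end

section
/- Let X be a real Banach space with topological dual X*, and let T : X ⇉ X* be a set-valued operator identified with its graph. There exists a nonempty closed convex set C ⊆ X such that T = N_C (the normal cone operator of C) if and only if T is maximally monotone and the zero functional 0 ∈ X* belongs to T(x) for every x in the domain of T. -/
open Set

noncomputable section

variable {X : Type*} [NormedAddCommGroup X] [NormedSpace ℝ X]

section EkelandHB

open Pointwise



/-- Ekeland's variational principle for a continuous function on a closed subset
of a complete normed space. -/
lemma ekeland_aux {X : Type*} [NormedAddCommGroup X] [CompleteSpace X]
    (C : Set X) (hcl : IsClosed C) (F : X → ℝ) (hF : Continuous F)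
    (m : ℝ) (hm : ∀ y ∈ C, m ≤ F y) (ε : ℝ) (hε : 0 < ε)
    (y₀ : X) (hy₀ : y₀ ∈ C) :
    ∃ z ∈ C, F z + ε * ‖z - y₀‖ ≤ F y₀ ∧ ∀ y ∈ C, F z ≤ F y + ε * ‖y - z‖ := by
  classical
  set S : X → Set X := fun z => {y ∈ C | F y + ε * ‖y - z‖ ≤ F z} with hS
  have hself : ∀ z ∈ C, z ∈ S z := by
    intro z hz; refine ⟨hz, by simp⟩
  have hSsub : ∀ z, S z ⊆ C := fun z y hy => hy.1
  have htrans : ∀ z y w, y ∈ S z → w ∈ S y → w ∈ S z := by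
    intro z y w hy hw
    refine ⟨hw.1, ?_⟩
    have h1 := hy.2
    have h2 := hw.2
    have h3 : ‖w - z‖ ≤ ‖w - y‖ + ‖y - z‖ := norm_sub_le_norm_sub_add_norm_sub w y z
    nlinarith
  have hbdd : ∀ z, BddBelow (F '' S z) := by
    intro z; exact ⟨m, by rintro _ ⟨y, hy, rfl⟩; exact hm y (hSsub z hy)⟩
  have hex : ∀ (n : ℕ) (z : X), ∃ y,
      z ∈ C → y ∈ S z ∧ F y < sInf (F '' S z) + 1 / (n + 1) := by
    intro n z
    by_cases hz : z ∈ C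
    · have hne : (F '' S z).Nonempty := ⟨F z, z, hself z hz, rfl⟩
      have hlt : sInf (F '' S z) < sInf (F '' S z) + 1 / (n + 1) := by
        have : (0:ℝ) < 1 / (n + 1) := by positivity
        linarith
      obtain ⟨a, ⟨y, hy, rfl⟩, ha⟩ := exists_lt_of_csInf_lt hne hlt
      exact ⟨y, fun _ => ⟨hy, ha⟩⟩
    · exact ⟨z, fun h => absurd h hz⟩
  choose pick hpick using hex
  set seq : ℕ → X := fun n => Nat.rec y₀ (fun n z => pick n z) n with hseq
  have hseq0 : seq 0 = y₀ := rfl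
  have hseqS : ∀ n, seq (n + 1) = pick n (seq n) := fun n => rfl
  have hmem : ∀ n, seq n ∈ C := by
    intro n
    induction n with
    | zero => exact hy₀
    | succ n ih => rw [hseqS n]; exact (hpick n (seq n) ih).1.1
  have hstep : ∀ n, seq (n + 1) ∈ S (seq n) := by
    intro n; rw [hseqS n]; exact (hpick n (seq n) (hmem n)).1
  have hnear : ∀ n, F (seq (n + 1)) < sInf (F '' S (seq n)) + 1 / (n + 1) := by
    intro n; rw [hseqS n]; exact (hpick n (seq n) (hmem n)).2
  have hchain : ∀ n k, seq (n + k) ∈ S (seq n) := by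
    intro n k
    induction k with
    | zero => exact hself _ (hmem n)
    | succ k ih => exact htrans _ _ _ ih (hstep (n + k))
  have hchain' : ∀ n p, n ≤ p → seq p ∈ S (seq n) := by
    intro n p hnp
    obtain ⟨k, rfl⟩ := Nat.exists_eq_add_of_le hnp
    exact hchain n k
  -- monotone convergence of F ∘ seq
  have hanti : Antitone (fun n => F (seq n)) := by
    apply antitone_nat_of_succ_le
    intro n
    have := (hstep n).2
    nlinarith [norm_nonneg (seq (n+1) - seq n)]
  have hbddb : BddBelow (Set.range fun n => F (seq n)) :=
    ⟨m, by rintro _ ⟨n, rfl⟩; exact hm _ (hmem n)⟩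
  set L := ⨅ n, F (seq n) with hL
  have hFtend : Filter.Tendsto (fun n => F (seq n)) Filter.atTop (nhds L) :=
    tendsto_atTop_ciInf hanti hbddb
  have hLle : ∀ n, L ≤ F (seq n) := fun n => ciInf_le hbddb n
  -- Cauchy
  have hdist : ∀ n p, n ≤ p → ε * ‖seq p - seq n‖ ≤ F (seq n) - F (seq p) := by
    intro n p hnp
    have := (hchain' n p hnp).2
    linarith
  have hcauchy : CauchySeq seq := by
    apply cauchySeq_of_le_tendsto_0 (fun N => 2 * (F (seq N) - L) / ε)
    · intro n p N hn hp
      have h1 := hdist N n hn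
      have h2 := hdist N p hp
      have h3 : dist (seq n) (seq p) ≤ ‖seq n - seq N‖ + ‖seq p - seq N‖ := by
        rw [dist_eq_norm]
        calc ‖seq n - seq p‖ ≤ ‖seq n - seq N‖ + ‖seq N - seq p‖ :=
              norm_sub_le_norm_sub_add_norm_sub _ _ _
          _ = _ := by rw [norm_sub_rev (seq N)]
      have h5 := hLle n
      have h6 := hLle p
      rw [le_div_iff₀ hε]
      nlinarith
    · have : Filter.Tendsto (fun N => 2 * (F (seq N) - L) / ε) Filter.atTop
          (nhds (2 * (L - L) / ε)) := by
        exact (((hFtend.sub_const L).const_mul 2).div_const ε)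
      simpa using this
  obtain ⟨z, hz⟩ := cauchySeq_tendsto_of_complete hcauchy
  have hzC : z ∈ C := hcl.mem_of_tendsto hz (Filter.Eventually.of_forall hmem)
  have hSclosed : ∀ n, IsClosed (S (seq n)) := by
    intro n
    have : S (seq n) = C ∩ {y | F y + ε * ‖y - seq n‖ ≤ F (seq n)} := rfl
    rw [this]
    exact hcl.inter (isClosed_le (by fun_prop) continuous_const)
  have hzS : ∀ n, z ∈ S (seq n) := by
    intro n
    have htend : Filter.Tendsto (fun k => seq (n + k)) Filter.atTop (nhds z) := by
      simpa [Nat.add_comm, Function.comp_def] using hz.comp (Filter.tendsto_add_atTop_nat n)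
    exact (hSclosed n).mem_of_tendsto htend (Filter.Eventually.of_forall (hchain n))
  refine ⟨z, hzC, ?_, ?_⟩
  · have := (hzS 0).2
    rw [hseq0] at this
    linarith
  · intro y hy
    by_contra hcon
    push_neg at hcon
    have hyS : ∀ n, y ∈ S (seq n) := by
      intro n
      refine ⟨hy, ?_⟩
      have h1 := (hzS n).2
      have h3 : ‖y - seq n‖ ≤ ‖y - z‖ + ‖z - seq n‖ := norm_sub_le_norm_sub_add_norm_sub _ _ _
      nlinarith
    have hge : ∀ n : ℕ, F (seq (n + 1)) - 1 / (n + 1) ≤ F y := by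
      intro n
      have h1 : sInf (F '' S (seq n)) ≤ F y := csInf_le (hbdd _) ⟨y, hyS n, rfl⟩
      have h2 := hnear n
      linarith
    have hFz : Filter.Tendsto (fun n : ℕ => F (seq (n + 1)) - 1 / (n + 1))
        Filter.atTop (nhds (L - 0)) := by
      refine Filter.Tendsto.sub ?_ ?_
      · exact hFtend.comp (Filter.tendsto_add_atTop_nat 1)
      · exact tendsto_one_div_add_atTop_nhds_zero_nat
    have hLy : L - 0 ≤ F y := le_of_tendsto hFz (Filter.Eventually.of_forall hge)
    have hLz : F z = L := tendsto_nhds_unique ((hF.tendsto z).comp hz) hFtend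
    have := hLle 0
    nlinarith [norm_nonneg (y - z), hcon]


variable {X : Type*} [NormedAddCommGroup X] [NormedSpace ℝ X]

/-- Hahn-Banach sandwich step: from the Ekeland approximate minimality, produce a
genuine supporting functional. -/
lemma hb_step {C : Set X} (hconv : Convex ℝ C) {z : X} (hzC : z ∈ C)
    (f : X →L[ℝ] ℝ) {ε : ℝ} (hε : 0 < ε)
    (hmin : ∀ y ∈ C, f y - f z ≤ ε * ‖y - z‖) :
    ∃ w : X →L[ℝ] ℝ, (∀ y ∈ C, w (y - z) ≤ 0) ∧
      ∀ v : X, f v - ε * ‖v‖ ≤ w v := by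
  classical
  set K : Set X := {v | ∃ y ∈ C, ∃ t : ℝ, 0 ≤ t ∧ v = t • (y - z)} with hK
  have h0K : (0 : X) ∈ K := ⟨z, hzC, 0, le_refl _, by simp⟩
  have hmemK : ∀ y ∈ C, (y - z) ∈ K := fun y hy => ⟨y, hy, 1, zero_le_one, by simp⟩
  have hfK : ∀ k ∈ K, f k ≤ ε * ‖k‖ := by
    rintro k ⟨y, hy, t, ht, rfl⟩
    have h1 := hmin y hy
    have h2 : f (t • (y - z)) = t * (f y - f z) := by
      rw [map_smul, map_sub, smul_eq_mul]
    rw [h2, norm_smul, Real.norm_eq_abs, abs_of_nonneg ht]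
    calc t * (f y - f z) ≤ t * (ε * ‖y - z‖) := by
          exact mul_le_mul_of_nonneg_left h1 ht
      _ = ε * (t * ‖y - z‖) := by ring
  have hKadd : ∀ k₁ ∈ K, ∀ k₂ ∈ K, k₁ + k₂ ∈ K := by
    rintro _ ⟨y₁, hy₁, t₁, ht₁, rfl⟩ _ ⟨y₂, hy₂, t₂, ht₂, rfl⟩
    rcases eq_or_lt_of_le (add_nonneg ht₁ ht₂ : (0:ℝ) ≤ t₁ + t₂) with h | h
    · have ht₁0 : t₁ = 0 := by nlinarith
      have ht₂0 : t₂ = 0 := by nlinarith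
      simp [ht₁0, ht₂0, h0K]
    · have hs0 : t₁ + t₂ ≠ 0 := ne_of_gt h
      refine ⟨(t₁ / (t₁ + t₂)) • y₁ + (t₂ / (t₁ + t₂)) • y₂,
        hconv hy₁ hy₂ (div_nonneg ht₁ h.le) (div_nonneg ht₂ h.le)
          (by rw [← add_div, div_self hs0]), t₁ + t₂, h.le, ?_⟩
      match_scalars <;> (field_simp; try ring)
  -- q and r
  set q : X → ℝ := fun v => ε * ‖v‖ - f v with hq
  have hq0 : q 0 = 0 := by simp [hq]
  have hqsub : ∀ v₁ v₂, q (v₁ + v₂) ≤ q v₁ + q v₂ := by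
    intro v₁ v₂
    have := norm_add_le v₁ v₂
    simp only [hq, map_add]
    nlinarith
  have hqhom : ∀ c : ℝ, 0 < c → ∀ v, q (c • v) = c * q v := by
    intro c hc v
    simp only [hq, map_smul, norm_smul, Real.norm_eq_abs, abs_of_nonneg hc.le, smul_eq_mul]
    ring
  have hqK : ∀ k ∈ K, 0 ≤ q k := fun k hk => by
    have := hfK k hk; simp only [hq]; linarith
  have hqlow : ∀ v, ∀ k ∈ K, -(ε * ‖v‖) - f v ≤ q (v + k) := by
    intro v k hk
    have h1 : ‖k‖ - ‖v‖ ≤ ‖v + k‖ := by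
      have := norm_sub_norm_le k (-v)
      simpa [sub_neg_eq_add, add_comm] using this
    have h2 := hfK k hk
    simp only [hq, map_add]
    nlinarith
  have hKsmul : ∀ c : ℝ, 0 ≤ c → ∀ k ∈ K, c • k ∈ K := by
    rintro c hc _ ⟨y, hy, t, ht, rfl⟩
    exact ⟨y, hy, c * t, mul_nonneg hc ht, by rw [smul_smul]⟩
  set r : X → ℝ := fun v => sInf ((fun k => q (v + k)) '' K) with hr
  have hrne : ∀ v, ((fun k => q (v + k)) '' K).Nonempty := fun v => ⟨q (v + 0), 0, h0K, rfl⟩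
  have hrbdd : ∀ v, BddBelow ((fun k => q (v + k)) '' K) := by
    intro v
    exact ⟨-(ε * ‖v‖) - f v, by rintro _ ⟨k, hk, rfl⟩; exact hqlow v k hk⟩
  have hrle : ∀ v, r v ≤ q v := by
    intro v
    have := csInf_le (hrbdd v) ⟨0, h0K, rfl⟩
    simpa using this
  have hrleK : ∀ v, ∀ k ∈ K, r v ≤ q (v + k) := fun v k hk => csInf_le (hrbdd v) ⟨k, hk, rfl⟩
  have hr0 : 0 ≤ r 0 := by
    apply le_csInf (hrne 0)
    rintro _ ⟨k, hk, rfl⟩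
    simpa using hqK k hk
  have hradd : ∀ v₁ v₂, r (v₁ + v₂) ≤ r v₁ + r v₂ := by
    intro v₁ v₂
    have key : ∀ k₁ ∈ K, ∀ k₂ ∈ K, r (v₁ + v₂) ≤ q (v₁ + k₁) + q (v₂ + k₂) := by
      intro k₁ hk₁ k₂ hk₂
      have h1 : r (v₁ + v₂) ≤ q (v₁ + v₂ + (k₁ + k₂)) := hrleK _ _ (hKadd k₁ hk₁ k₂ hk₂)
      have h2 : v₁ + v₂ + (k₁ + k₂) = (v₁ + k₁) + (v₂ + k₂) := by abel
      rw [h2] at h1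
      exact h1.trans (hqsub _ _)
    have step1 : ∀ k₁ ∈ K, r (v₁ + v₂) - q (v₁ + k₁) ≤ r v₂ := by
      intro k₁ hk₁
      apply le_csInf (hrne v₂)
      rintro _ ⟨k₂, hk₂, rfl⟩
      linarith [key k₁ hk₁ k₂ hk₂]
    have step2 : r (v₁ + v₂) - r v₂ ≤ r v₁ := by
      apply le_csInf (hrne v₁)
      rintro _ ⟨k₁, hk₁, rfl⟩
      linarith [step1 k₁ hk₁]
    linarith
  have hrhom : ∀ c : ℝ, 0 < c → ∀ v, r (c • v) = c * r v := by
    intro c hc v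
    have hset : ((fun k => q (c • v + k)) '' K) = c • ((fun k => q (v + k)) '' K) := by
      ext a
      constructor
      · rintro ⟨k, hk, rfl⟩
        refine ⟨q (v + c⁻¹ • k), ⟨c⁻¹ • k, hKsmul c⁻¹ (by positivity) k hk, rfl⟩, ?_⟩
        show c • q (v + c⁻¹ • k) = q (c • v + k)
        rw [smul_eq_mul, ← hqhom c hc, smul_add, smul_smul, mul_inv_cancel₀ hc.ne', one_smul]
      · rintro ⟨_, ⟨k, hk, rfl⟩, rfl⟩
        refine ⟨c • k, hKsmul c hc.le k hk, ?_⟩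
        show q (c • v + c • k) = c • q (v + k)
        rw [← smul_add, hqhom c hc, smul_eq_mul]
    rw [hr]
    simp only
    rw [hset, Real.sInf_smul_of_nonneg hc.le, smul_eq_mul]
  -- Hahn-Banach extension
  obtain ⟨g, hg0, hg⟩ := exists_extension_of_le_sublinear ((0 : X →ₗ[ℝ] ℝ).toPMap ⊥) r hrhom
    hradd (by
      rintro ⟨x, hx⟩
      have hx0 : x = (0 : X) := (Submodule.mem_bot ℝ).1 hx
      simp only [LinearMap.toPMap_apply, LinearMap.zero_apply]
      subst hx0
      exact hr0)
  have hgq : ∀ v, g v ≤ q v := fun v => (hg v).trans (hrle v)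
  have hgK : ∀ k ∈ K, 0 ≤ g k := by
    intro k hk
    have h1 : g (-k) ≤ r (-k) := hg _
    have h2 : r (-k) ≤ q (-k + k) := hrleK _ _ hk
    rw [neg_add_cancel, hq0] at h2
    have h3 : g (-k) = -g k := map_neg g k
    linarith
  have hbound : ∀ v, ‖g v‖ ≤ (ε + ‖f‖) * ‖v‖ := by
    intro v
    have hfv1 : f v ≤ ‖f‖ * ‖v‖ := (le_abs_self _).trans (f.le_opNorm v)
    have hfv2 : -(‖f‖ * ‖v‖) ≤ f v := neg_le_of_abs_le (f.le_opNorm v)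
    have h1 : g v ≤ (ε + ‖f‖) * ‖v‖ := by
      have := hgq v
      simp only [hq] at this
      nlinarith
    have h2 : -((ε + ‖f‖) * ‖v‖) ≤ g v := by
      have h3 := hgq (-v)
      simp only [hq, map_neg, norm_neg] at h3
      have h4 : g (-v) = -g v := map_neg g v
      nlinarith
    rw [Real.norm_eq_abs]
    exact abs_le.2 ⟨h2, h1⟩
  set G : X →L[ℝ] ℝ := g.mkContinuous (ε + ‖f‖) hbound with hG
  refine ⟨-G, ?_, ?_⟩
  · intro y hy
    have := hgK (y - z) (hmemK y hy)
    simp only [ContinuousLinearMap.neg_apply]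
    rw [hG]
    simp only [LinearMap.mkContinuous_apply]
    linarith
  · intro v
    have := hgq v
    simp only [hq] at this
    simp only [ContinuousLinearMap.neg_apply, hG, LinearMap.mkContinuous_apply]
    linarith

end EkelandHB

section AuxiliaryLemmas

open Pointwise

variable {X : Type*} [NormedAddCommGroup X] [NormedSpace ℝ X]

lemma exists_support_point [CompleteSpace X] {C : Set X} (hne : C.Nonempty)
    (hcl : IsClosed C) (hconv : Convex ℝ C) {x : X} (hx : x ∉ C) :
    ∃ z ∈ C, ∃ w : X →L[ℝ] ℝ, (∀ y ∈ C, w (y - z) ≤ 0) ∧ 0 < w (x - z) := by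
  obtain ⟨f, u, hfu, hux⟩ := geometric_hahn_banach_closed_point hconv hcl hx
  have hbddA : BddAbove (f '' C) := ⟨u, by rintro _ ⟨y, hy, rfl⟩; exact (hfu y hy).le⟩
  have hAne : (f '' C).Nonempty := hne.image f
  set α := sSup (f '' C) with hα
  have hαu : α ≤ u := csSup_le hAne (by rintro _ ⟨y, hy, rfl⟩; exact (hfu y hy).le)
  have hfα : ∀ y ∈ C, f y ≤ α := fun y hy => le_csSup hbddA ⟨y, hy, rfl⟩
  have hgap : 0 < f x - α := by linarith
  obtain ⟨a, ⟨y₀, hy₀, rfl⟩, hy₀f⟩ := exists_lt_of_lt_csSup hAne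
    (show α - (f x - α) / 4 < α by linarith)
  set ε := (f x - α) / (4 * (‖x - y₀‖ + 1)) with hε
  have hεpos : 0 < ε := div_pos hgap (by positivity)
  have hεdef : ε * (4 * (‖x - y₀‖ + 1)) = f x - α := by
    rw [hε]; field_simp
  obtain ⟨z, hzC, hz1, hz2⟩ := ekeland_aux C hcl (fun y => -(f y)) (f.continuous.neg)
    (-α) (fun y hy => by simpa using hfα y hy) ε hεpos y₀ hy₀
  have hmin : ∀ y ∈ C, f y - f z ≤ ε * ‖y - z‖ := by
    intro y hy
    have := hz2 y hy
    linarith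
  obtain ⟨w, hw1, hw2⟩ := hb_step hconv hzC f hεpos hmin
  refine ⟨z, hzC, w, hw1, ?_⟩
  have hw2' := hw2 (x - z)
  have hfxz : f (x - z) = f x - f z := map_sub f x z
  have hfz : f z ≤ α := hfα z hzC
  have htri : ‖x - z‖ ≤ ‖x - y₀‖ + ‖z - y₀‖ := by
    have := norm_sub_le_norm_sub_add_norm_sub x y₀ z
    calc ‖x - z‖ ≤ ‖x - y₀‖ + ‖y₀ - z‖ := norm_sub_le_norm_sub_add_norm_sub x y₀ z
      _ = ‖x - y₀‖ + ‖z - y₀‖ := by rw [norm_sub_rev y₀ z]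
  have hzy₀ : ε * ‖z - y₀‖ ≤ α - f y₀ := by
    linarith [hfα z hzC, hz1]
  have hεxy : ε * ‖x - y₀‖ ≤ (f x - α) / 4 := by
    nlinarith [hεpos.le]
  have h1 : ε * ‖x - z‖ ≤ (f x - α) / 4 + (α - f y₀) := by
    nlinarith [hεpos.le]
  have h2 : α - f y₀ < (f x - α) / 4 := by linarith
  linarith

lemma normalConeGraph_monotone (C : Set X) : MonotoneGraph (normalConeGraph C) := by
  rintro ⟨x, u⟩ ⟨hx, hu⟩ ⟨y, v⟩ ⟨hy, hv⟩
  have h1 := hu y hy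
  have h2 := hv x hx
  simp only [ContinuousLinearMap.sub_apply, map_sub] at *
  linarith

end AuxiliaryLemmas

/-- `T` is the normal cone operator of some nonempty closed convex set iff
`T` is maximally monotone and the zero functional belongs to `T(x)` for every `x ∈ dom T`. -/
theorem normalCone_iff_maximalMonotone_and_zero
    {X : Type*} [NormedAddCommGroup X] [NormedSpace ℝ X] [CompleteSpace X]
    (T : Set (X × (X →L[ℝ] ℝ))) :
    (∃ C : Set X, C.Nonempty ∧ IsClosed C ∧ Convex ℝ C ∧ T = normalConeGraph C) ↔
      (MaximalMonotoneGraph T ∧ ∀ x ∈ graphDom T, (x, (0 : X →L[ℝ] ℝ)) ∈ T) := by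
  constructor
  · rintro ⟨C, hne, hcl, hconv, rfl⟩
    refine ⟨⟨normalConeGraph_monotone C, ?_⟩, ?_⟩
    · intro S hS hsub
      apply Set.Subset.antisymm _ hsub
      rintro ⟨x, u⟩ hxu
      have hxC : x ∈ C := by
        by_contra hx
        obtain ⟨z, hzC, w, hw1, hw2⟩ := exists_support_point hne hcl hconv hx
        set t := (|u (x - z)| + 1) / w (x - z) with ht
        have htpos : 0 ≤ t := div_nonneg (by positivity) hw2.le
        have hmem : ((z, t • w) : X × (X →L[ℝ] ℝ)) ∈ normalConeGraph C := by
          refine ⟨hzC, fun y hy => ?_⟩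
          have := hw1 y hy
          simp only [ContinuousLinearMap.smul_apply, smul_eq_mul]
          exact mul_nonpos_of_nonneg_of_nonpos htpos this
        have hmono := hS _ hxu _ (hsub hmem)
        simp only [ContinuousLinearMap.sub_apply, ContinuousLinearMap.smul_apply,
          smul_eq_mul] at hmono
        have htw : t * w (x - z) = |u (x - z)| + 1 := by
          rw [ht, div_mul_cancel₀]
          exact ne_of_gt hw2
        have := le_abs_self (u (x - z))
        linarith
      refine ⟨hxC, fun y hy => ?_⟩
      have hmem0 : ((y, (0 : X →L[ℝ] ℝ)) : X × (X →L[ℝ] ℝ)) ∈ normalConeGraph C :=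
        ⟨hy, fun _ _ => by simp⟩
      have hmono := hS _ hxu _ (hsub hmem0)
      simp only [ContinuousLinearMap.sub_apply, ContinuousLinearMap.zero_apply,
        sub_zero] at hmono
      have heq : u (y - x) = -(u (x - y)) := by rw [← neg_sub, map_neg]
      linarith
    · intro x hx
      obtain ⟨v, hv⟩ := hx
      exact ⟨hv.1, fun y _ => by simp⟩
  · rintro ⟨⟨hmono, hmax⟩, hzero⟩
    have hTne : T.Nonempty := by
      by_contra h
      rw [Set.not_nonempty_iff_eq_empty] at h
      have hsingle : MonotoneGraph {((0 : X), (0 : X →L[ℝ] ℝ))} := by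
        rintro p hp q hq
        simp only [Set.mem_singleton_iff] at hp hq
        subst hp; subst hq
        simp
      have := hmax _ hsingle (by rw [h]; exact Set.empty_subset _)
      rw [h] at this
      exact Set.singleton_ne_empty _ this
    obtain ⟨⟨x₀, u₀⟩, hx₀⟩ := hTne
    set C := closure (convexHull ℝ (graphDom T)) with hC
    have hDC : graphDom T ⊆ C := (subset_convexHull ℝ _).trans subset_closure
    have hsub : T ⊆ normalConeGraph C := by
      rintro ⟨x, u⟩ hxu
      refine ⟨hDC ⟨u, hxu⟩, ?_⟩
      have hA : C ⊆ {y | u (y - x) ≤ 0} := by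
        apply closure_minimal
        · apply convexHull_min
          · rintro y ⟨v, hv⟩
            have h0 : ((y, (0 : X →L[ℝ] ℝ)) : X × (X →L[ℝ] ℝ)) ∈ T := hzero y ⟨v, hv⟩
            have hm := hmono _ hxu _ h0
            simp only [ContinuousLinearMap.sub_apply, ContinuousLinearMap.zero_apply,
              sub_zero] at hm
            show u (y - x) ≤ 0
            have heq : u (y - x) = -(u (x - y)) := by rw [← neg_sub, map_neg]
            linarith
          · have hset : {y : X | u (y - x) ≤ 0} = {y : X | u y ≤ u x} := by
              ext y
              simp [map_sub, sub_nonpos]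
            rw [hset]
            exact convex_halfSpace_le ⟨map_add u, map_smul u⟩ (u x)
        · exact isClosed_le (u.continuous.comp (continuous_id.sub continuous_const))
            continuous_const
      exact fun y hy => hA hy
    have heq := hmax _ (normalConeGraph_monotone C) hsub
    exact ⟨C, ⟨x₀, hDC ⟨u₀, hx₀⟩⟩, isClosed_closure,
      (convex_convexHull ℝ _).closure, heq.symm⟩
end
end

section
/- Let X be a real Banach space with topological dual X*, and let T : X ⇉ X* be a set-valued operator identified with its graph. There exists a lower semicontinuous proper sublinear functional s : X → ℝ ∪ {+∞} such that T = ∂s (the Fenchel subdifferential operator of s) if and only if T is maximally monotone and the range of T equals T(0_X). -/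
open Set

noncomputable section

variable {X : Type*} [NormedAddCommGroup X] [NormedSpace ℝ X]

/-- The set of linear functionals dominated by `s`. -/
def sgSet (s : X → EReal) : Set (X →L[ℝ] ℝ) := {u | ∀ y, ((u y : ℝ) : EReal) ≤ s y}

section Forward

variable {s : X → EReal}

lemma fin_of_ne_top (hp : ProperFn s) {x : X} (hx : s x ≠ ⊤) : ∃ a : ℝ, s x = (a : EReal) :=
  ⟨(s x).toReal, (EReal.coe_toReal hx (hp.1 x)).symm⟩

lemma s_zero (hp : ProperFn s) (hh : PosHomFn s) : s 0 = 0 := by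
  obtain ⟨x₀, hx₀⟩ := hp.2
  have := hh x₀ hx₀ 0 le_rfl
  simpa using this

lemma subadd (hp : ProperFn s) (hc : ConvexFn s) (hh : PosHomFn s) (x y : X) :
    s (x + y) ≤ s x + s y := by
  rcases eq_or_ne (s x) ⊤ with hx | hx
  · rw [hx, EReal.top_add_of_ne_bot (hp.1 y)]; exact le_top
  rcases eq_or_ne (s y) ⊤ with hy | hy
  · rw [hy, EReal.add_top_of_ne_bot (hp.1 x)]; exact le_top
  obtain ⟨a, ha⟩ := fin_of_ne_top hp hx
  obtain ⟨b, hb⟩ := fin_of_ne_top hp hy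
  have hcv := hc x y (1/2) (by norm_num) (by norm_num)
  rw [ha, hb, show ((1/2:ℝ)) • x + ((1 - 1/2:ℝ)) • y = (1/2:ℝ) • (x + y) by
      norm_num [smul_add]] at hcv
  rw [show ((1/2:ℝ):EReal) * (a:EReal) + ((1 - 1/2:ℝ):EReal) * (b:EReal)
      = (((1/2) * a + (1/2) * b : ℝ) : EReal) by norm_cast; norm_num] at hcv
  have hm : s ((1/2:ℝ) • (x + y)) ≠ ⊤ := fun htop => by
    rw [htop] at hcv; exact absurd (top_le_iff.1 hcv) (EReal.coe_ne_top _)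
  have h2 := hh _ hm 2 (by norm_num)
  rw [show (2:ℝ) • ((1/2:ℝ) • (x+y)) = x + y by rw [smul_smul]; norm_num] at h2
  rw [h2, ha, hb, show ((a:ℝ):EReal) + (b:EReal) = ((a + b : ℝ):EReal) by norm_cast]
  calc ((2:ℝ):EReal) * s ((1/2:ℝ) • (x+y))
      ≤ ((2:ℝ):EReal) * (((1/2) * a + (1/2) * b : ℝ) : EReal) :=
        mul_le_mul_of_nonneg_left hcv (by norm_num)
    _ = ((a + b : ℝ) : EReal) := by norm_cast; ring

lemma mem_subdiff_iff (hp : ProperFn s) (hc : ConvexFn s) (hh : PosHomFn s) {z : X}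
    {u : X →L[ℝ] ℝ} : (z, u) ∈ subdiffGraph s ↔ u ∈ sgSet s ∧ s z ≤ ((u z : ℝ) : EReal) := by
  constructor
  · intro h
    have hz : s z ≠ ⊤ := by
      intro htop
      obtain ⟨x₀, hx₀⟩ := hp.2
      have := h x₀
      rw [show (z, u).1 = z from rfl, htop, EReal.top_add_coe] at this
      exact hx₀ (top_le_iff.1 this)
    obtain ⟨a, ha⟩ := fin_of_ne_top hp hz
    have h0 := h 0
    rw [show (z, u).1 = z from rfl, show (z, u).2 = u from rfl, ha, s_zero hp hh] at h0
    simp only [zero_sub, map_neg] at h0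
    rw [show ((a:ℝ):EReal) + ((-(u z) : ℝ):EReal) = ((a - u z : ℝ) : EReal) by
      norm_cast] at h0
    have hle : a ≤ u z := by
      have : (a - u z : ℝ) ≤ (0:ℝ) := by exact_mod_cast h0
      linarith
    refine ⟨fun y => ?_, by rw [ha]; exact_mod_cast hle⟩
    have hy := h (z + y)
    have hsub := subadd hp hc hh z y
    rw [show (z, u).1 = z from rfl, show (z, u).2 = u from rfl, ha] at hy
    rw [ha] at hsub
    simp only [add_sub_cancel_left] at hy
    have hfin : ((a:ℝ):EReal) + ((u y : ℝ):EReal) ≤ ((a:ℝ):EReal) + s y :=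
      le_trans hy hsub
    exact (EReal.addLECancellable_coe a) hfin
  · rintro ⟨hC, hz⟩ y
    show s z + ((u (y - z) : ℝ) : EReal) ≤ s y
    calc s z + ((u (y - z) : ℝ) : EReal)
        ≤ ((u z : ℝ):EReal) + ((u (y - z) : ℝ) : EReal) := add_le_add_left hz _
      _ = ((u y : ℝ) : EReal) := by norm_cast; rw [map_sub]; ring
      _ ≤ s y := hC y

omit [NormedSpace ℝ X] in
lemma epi_closed (hl : LowerSemicontinuous s) : IsClosed (Epi s) := by
  rw [← isOpen_compl_iff, isOpen_iff_mem_nhds]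
  rintro ⟨x, r⟩ hxr
  rw [mem_compl_iff, Epi, mem_setOf] at hxr
  obtain ⟨c, hc1, hc2⟩ := EReal.lt_iff_exists_real_btwn.1 (not_le.1 hxr)
  have hU := hl x _ hc2
  rw [eventually_nhds_iff] at hU
  obtain ⟨U, hU1, hU2, hU3⟩ := hU
  rw [mem_nhds_prod_iff]
  refine ⟨U, hU2.mem_nhds hU3, Iio c, Iio_mem_nhds (EReal.coe_lt_coe_iff.1 hc1), ?_⟩
  rintro ⟨y, t⟩ ⟨hy, ht⟩
  rw [mem_compl_iff, Epi, mem_setOf, not_le]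
  exact lt_trans (EReal.coe_lt_coe_iff.2 ht) (hU1 y hy)

lemma epi_convex (hc : ConvexFn s) : Convex ℝ (Epi s) := by
  rintro ⟨x, rx⟩ hx ⟨y, ry⟩ hy a b ha hb hab
  simp only [Epi, mem_setOf] at hx hy ⊢
  have hb' : b = 1 - a := by linarith
  subst hb'
  calc s (a • x + (1-a) • y) ≤ (a : EReal) * s x + ((1 - a : ℝ) : EReal) * s y :=
        hc x y a ha (by linarith)
    _ ≤ (a : EReal) * (rx : EReal) + ((1 - a : ℝ) : EReal) * (ry : EReal) :=
        add_le_add (mul_le_mul_of_nonneg_left hx (by exact_mod_cast ha))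
          (mul_le_mul_of_nonneg_left hy (by exact_mod_cast hb))
    _ = (((a • (x, rx) + (1-a) • (y, ry) : X × ℝ).2 : ℝ) : EReal) := by
        norm_cast


lemma sep (hl : LowerSemicontinuous s) (hp : ProperFn s) (hc : ConvexFn s) (hh : PosHomFn s)
    {x : X} {r : ℝ} (hr : ((r:ℝ):EReal) < s x) :
    ∃ (w : X →L[ℝ] ℝ) (a c : ℝ), 0 < c ∧ a ≤ 0 ∧
      (∀ p ∈ Epi s, w p.1 + p.2 * a ≤ 0) ∧ c < w x + r * a := by
  have hnot : (x, r) ∉ Epi s := by rw [Epi, mem_setOf]; exact not_le.2 hr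
  obtain ⟨f, c, hfa, hfx⟩ :=
    geometric_hahn_banach_closed_point (epi_convex hc) (epi_closed hl) hnot
  set w : X →L[ℝ] ℝ := f.comp (ContinuousLinearMap.inl ℝ X ℝ) with hwdef
  set a : ℝ := f (0, 1) with hadef
  have hft : ∀ y : X, ∀ t : ℝ, f (y, t) = w y + t * a := by
    intro y t
    have hsplit : (y, t) = ((y, (0:ℝ)) : X × ℝ) + t • (((0:X), (1:ℝ)) : X × ℝ) := by
      simp [Prod.ext_iff]
    rw [hsplit, map_add, map_smul]
    simp [hwdef, hadef, smul_eq_mul]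
  have h0c : (0:ℝ) < c := by
    have h00 : ((0:X), (0:ℝ)) ∈ Epi s := by
      rw [Epi, mem_setOf, s_zero hp hh]; exact le_refl _
    have := hfa _ h00
    rw [show ((0:X), (0:ℝ)) = (0 : X × ℝ) from rfl, map_zero] at this
    simpa using this
  have hle0 : ∀ p ∈ Epi s, f p ≤ 0 := by
    intro p hpE
    by_contra hpos
    push_neg at hpos
    have hsc : ∀ lam : ℝ, 0 ≤ lam → lam • p ∈ Epi s := by
      intro lam hlam
      rw [Epi, mem_setOf] at hpE ⊢
      have hne : s p.1 ≠ ⊤ := fun h => by rw [h] at hpE; exact (EReal.coe_ne_top _) (top_le_iff.1 hpE)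
      show s (lam • p).1 ≤ (((lam • p).2 : ℝ) : EReal)
      rw [Prod.smul_fst, Prod.smul_snd, hh p.1 hne lam hlam, smul_eq_mul, EReal.coe_mul]
      exact mul_le_mul_of_nonneg_left hpE (by exact_mod_cast hlam)
    have hcon := hfa _ (hsc (c / f p + 1) (by positivity))
    rw [map_smul, smul_eq_mul, add_mul, div_mul_cancel₀ _ (ne_of_gt hpos), one_mul] at hcon
    linarith
  have ha0 : a ≤ 0 := by
    have h01 : ((0:X), (1:ℝ)) ∈ Epi s := by
      rw [Epi, mem_setOf, s_zero hp hh]; exact_mod_cast zero_le_one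
    exact hle0 _ h01
  refine ⟨w, a, c, h0c, ha0, fun p hpE => ?_, ?_⟩
  · have := hle0 p hpE
    rwa [show p = (p.1, p.2) from rfl, hft p.1 p.2] at this
  · have := hfx
    rwa [hft x r] at this

lemma sgSet_mem_of_neg {w : X →L[ℝ] ℝ} {a : ℝ} (hp : ProperFn s) (ha : a < 0)
    (hEpi : ∀ p ∈ Epi s, w p.1 + p.2 * a ≤ 0) : (-a)⁻¹ • w ∈ sgSet s := by
  intro y
  rcases eq_or_ne (s y) ⊤ with hy | hy
  · rw [hy]; exact le_top
  obtain ⟨b, hb⟩ := fin_of_ne_top hp hy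
  have hEb := hEpi (y, b) (by rw [Epi, mem_setOf, hb])
  rw [hb]
  have : ((-a)⁻¹ • w) y = (-a)⁻¹ * w y := rfl
  rw [this]
  have hna : (0:ℝ) < -a := by linarith
  rw [EReal.coe_le_coe_iff]
  rw [inv_mul_le_iff₀ hna]
  nlinarith [hEb]

lemma sgSet_nonempty (hl : LowerSemicontinuous s) (hp : ProperFn s) (hc : ConvexFn s)
    (hh : PosHomFn s) : (sgSet s).Nonempty := by
  obtain ⟨x₁, hx₁⟩ := hp.2
  obtain ⟨a₁, ha₁⟩ := fin_of_ne_top hp hx₁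
  have hr : ((a₁ - 1 : ℝ):EReal) < s x₁ := by
    rw [ha₁]; exact_mod_cast (by linarith : a₁ - 1 < a₁)
  obtain ⟨w, a, c, hc0, ha0, hEpi, hwx⟩ := sep hl hp hc hh hr
  have hane : a < 0 := by
    rcases lt_or_eq_of_le ha0 with h | h
    · exact h
    · exfalso
      have h1 := hEpi (x₁, a₁) (by rw [Epi, mem_setOf, ha₁])
      rw [h] at h1 hwx
      simp only [mul_zero, add_zero] at h1 hwx
      linarith
  exact ⟨_, sgSet_mem_of_neg hp hane hEpi⟩

lemma exists_dominated (hl : LowerSemicontinuous s) (hp : ProperFn s) (hc : ConvexFn s)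
    (hh : PosHomFn s) {x : X} {r : ℝ} (hr : ((r:ℝ):EReal) < s x) :
    ∃ u ∈ sgSet s, r < u x := by
  obtain ⟨w, a, c, hc0, ha0, hEpi, hwx⟩ := sep hl hp hc hh hr
  rcases lt_or_eq_of_le ha0 with ha | ha
  · refine ⟨_, sgSet_mem_of_neg hp ha hEpi, ?_⟩
    have : ((-a)⁻¹ • w) x = (-a)⁻¹ * w x := rfl
    rw [this]
    have hna : (0:ℝ) < -a := by linarith
    rw [lt_inv_mul_iff₀ hna]
    nlinarith
  · -- a = 0
    obtain ⟨u₀, hu₀⟩ := sgSet_nonempty hl hp hc hh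
    rw [ha] at hwx
    simp only [mul_zero, add_zero] at hwx
    have hwx0 : 0 < w x := lt_trans hc0 hwx
    set t : ℝ := max 0 ((r + 1 - u₀ x) / w x) with htdef
    have ht0 : 0 ≤ t := le_max_left _ _
    refine ⟨u₀ + t • w, fun y => ?_, ?_⟩
    · rcases eq_or_ne (s y) ⊤ with hy | hy
      · rw [hy]; exact le_top
      obtain ⟨b, hb⟩ := fin_of_ne_top hp hy
      have hEb := hEpi (y, b) (by rw [Epi, mem_setOf, hb])
      rw [ha, mul_zero, add_zero] at hEb
      have hu₀y : (u₀ y : EReal) ≤ (b : EReal) := by rw [← hb]; exact hu₀ y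
      rw [hb]
      have : ((u₀ + t • w) y : ℝ) = u₀ y + t * w y := rfl
      rw [this, EReal.coe_le_coe_iff]
      have : u₀ y ≤ b := by exact_mod_cast hu₀y
      nlinarith
    · have : ((u₀ + t • w) x : ℝ) = u₀ x + t * w x := rfl
      rw [this]
      rcases le_or_gt (r + 1 - u₀ x) 0 with h | h
      · nlinarith
      · have ht : t = (r + 1 - u₀ x) / w x := by
          rw [htdef, max_eq_right]; positivity
        rw [ht, div_mul_cancel₀ _ (ne_of_gt hwx0)]
        linarith

end Forward

section Ekeland

lemma ekeland {M : Type*} [MetricSpace M] [CompleteSpace M] [Nonempty M]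
    (G : M → ℝ) (hG : Continuous G) (m : ℝ) (hm : ∀ p, m ≤ G p) (x₀ : M) :
    ∃ z, G z ≤ G x₀ ∧ ∀ p, G z ≤ G p + (1/2) * dist p z := by
  classical
  set S : M → Set M := fun q => {p | G p + (1/2) * dist p q ≤ G q} with hS
  have hself : ∀ q, q ∈ S q := fun q => by simp [hS]
  have hbdd : ∀ q, BddBelow (G '' S q) := fun q => ⟨m, by rintro _ ⟨p, _, rfl⟩; exact hm p⟩
  have hne : ∀ q, (G '' S q).Nonempty := fun q => ⟨G q, q, hself q, rfl⟩
  set c : M → ℝ := fun q => sInf (G '' S q) with hcd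
  have hstep : ∀ (n : ℕ) (q : M), ∃ p, p ∈ S q ∧ G p ≤ c q + (1/2)^n := by
    intro n q
    obtain ⟨gp, hgp, hlt⟩ := Real.lt_sInf_add_pos (hne q) (show (0:ℝ) < (1/2)^n by positivity)
    obtain ⟨p, hp, rfl⟩ := hgp
    exact ⟨p, hp, le_of_lt hlt⟩
  set x : ℕ → M := fun n => Nat.rec x₀ (fun n q => Classical.choose (hstep n q)) n with hx
  have hx0 : x 0 = x₀ := rfl
  have hxs : ∀ n, x (n+1) = Classical.choose (hstep n (x n)) := fun n => rfl
  have hmem : ∀ n, x (n+1) ∈ S (x n) := fun n => by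
    rw [hxs n]; exact (Classical.choose_spec (hstep n (x n))).1
  have hcn : ∀ n, G (x (n+1)) ≤ c (x n) + (1/2)^n := fun n => by
    rw [hxs n]; exact (Classical.choose_spec (hstep n (x n))).2
  have hchain : ∀ n k, n ≤ k → G (x k) + (1/2) * dist (x k) (x n) ≤ G (x n) := by
    intro n k hnk
    induction k with
    | zero => interval_cases n; simp
    | succ k ih =>
      rcases Nat.lt_or_ge n (k+1) with h | h
      · have hnk' : n ≤ k := Nat.lt_succ_iff.1 h
        have h1 := ih hnk'
        have h2 := hmem k
        rw [hS] at h2; simp only [mem_setOf] at h2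
        have htri : dist (x (k+1)) (x n) ≤ dist (x (k+1)) (x k) + dist (x k) (x n) :=
          dist_triangle _ _ _
        linarith
      · have : n = k+1 := le_antisymm hnk h
        subst this; simp
  have hdec : ∀ n k, n ≤ k → G (x k) ≤ G (x n) := by
    intro n k h
    have h1 := hchain n k h
    have h2 := dist_nonneg (x := x k) (y := x n)
    linarith
  have hGbdd : BddBelow (Set.range (fun n => G (x n))) := ⟨m, by rintro _ ⟨n, rfl⟩; exact hm _⟩
  set l : ℝ := ⨅ n, G (x n) with hl
  have hlle : ∀ n, l ≤ G (x n) := fun n => ciInf_le hGbdd n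
  have htend : Filter.Tendsto (fun n => G (x n)) Filter.atTop (nhds l) :=
    tendsto_atTop_ciInf (fun a b hab => hdec a b hab) hGbdd
  have hcauchy : CauchySeq x := by
    apply cauchySeq_of_le_tendsto_0 (fun n => 2 * (G (x n) - l))
    · intro n k N hn hk
      wlog hnk : n ≤ k generalizing n k
      · rw [dist_comm]; exact this k n hk hn (le_of_not_ge hnk)
      have h1 := hchain n k hnk
      have h2 := hdec N n hn
      have h3 := hlle k
      have h4 : dist (x n) (x k) = dist (x k) (x n) := dist_comm _ _
      linarith
    · have h5 : Filter.Tendsto (fun n => G (x n) - l) Filter.atTop (nhds (l - l)) :=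
        htend.sub tendsto_const_nhds
      have := h5.const_mul (2:ℝ)
      simpa using this
  obtain ⟨z, hz⟩ := cauchySeq_tendsto_of_complete hcauchy
  have hGz : Filter.Tendsto (fun n => G (x n)) Filter.atTop (nhds (G z)) :=
    (hG.continuousAt.tendsto.comp hz)
  have hGzl : G z = l := tendsto_nhds_unique hGz htend
  have hA : ∀ n, G z + (1/2) * dist z (x n) ≤ G (x n) := by
    intro n
    have hd : Filter.Tendsto (fun k => dist (x k) (x n)) Filter.atTop (nhds (dist z (x n))) :=
      hz.dist tendsto_const_nhds
    have hsum : Filter.Tendsto (fun k => G (x k) + (1/2) * dist (x k) (x n)) Filter.atTop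
        (nhds (G z + (1/2) * dist z (x n))) := hGz.add (hd.const_mul _)
    apply le_of_tendsto hsum
    filter_upwards [Filter.eventually_ge_atTop n] with k hk
    exact hchain n k hk
  refine ⟨z, ?_, ?_⟩
  · have h1 := hA 0
    have h2 := dist_nonneg (x := z) (y := x 0)
    rw [hx0] at h1 h2
    linarith
  · intro p
    by_contra hcon
    push_neg at hcon
    have hpS : ∀ n, p ∈ S (x n) := by
      intro n
      rw [hS]; simp only [mem_setOf]
      have htri : dist p (x n) ≤ dist p z + dist z (x n) := dist_triangle _ _ _
      have h1 := hA n
      rw [hGzl] at hcon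
      linarith
    have hcp : ∀ n, c (x n) ≤ G p := fun n => csInf_le (hbdd _) ⟨p, hpS n, rfl⟩
    have hstep2 : ∀ n, G (x (n+1)) ≤ G p + (1/2)^n := fun n =>
      le_trans (hcn n) (by linarith [hcp n])
    have hlim : l ≤ G p := by
      have h1 : Filter.Tendsto (fun n : ℕ => G p + (1/2:ℝ)^n) Filter.atTop (nhds (G p + 0)) :=
        tendsto_const_nhds.add (tendsto_pow_atTop_nhds_zero_of_lt_one (by norm_num) (by norm_num))
      have h2 : Filter.Tendsto (fun n => G (x (n+1))) Filter.atTop (nhds l) :=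
        htend.comp (Filter.tendsto_add_atTop_nat 1)
      have h3 := le_of_tendsto_of_tendsto' h2 h1 hstep2
      simpa using h3
    have h4 := dist_nonneg (x := p) (y := z)
    rw [hGzl] at hcon
    linarith

end Ekeland


section Sandwich

variable {X : Type*} [NormedAddCommGroup X] [NormedSpace ℝ X]

lemma sandwich {K : Set (X × ℝ)} (hconv : Convex ℝ K) {z : X} {r Kc : ℝ} (hKc : 0 ≤ Kc)
    (hzK : (z, r) ∈ K) (hslope : ∀ p ∈ K, r - Kc * ‖p.1 - z‖ ≤ p.2) :
    ∃ u' : X →L[ℝ] ℝ, ∀ p ∈ K, r + u' (p.1 - z) ≤ p.2 := by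
  classical
  set A : Set (X × ℝ) := {p | p.2 < r - Kc * ‖p.1 - z‖} with hA
  have hAopen : IsOpen A := by
    apply isOpen_lt continuous_snd
    exact continuous_const.sub
      (continuous_const.mul ((continuous_fst.sub continuous_const).norm))
  have hAconv : Convex ℝ A := by
    rintro ⟨p1, t1⟩ h1 ⟨q1, t2⟩ h2 a b ha hb hab
    simp only [hA, mem_setOf] at h1 h2 ⊢
    rcases eq_or_lt_of_le ha with ha0 | hapos
    · have hb1 : b = 1 := by linarith
      simp [← ha0, hb1] at *
      simpa using h2
    rcases eq_or_lt_of_le hb with hb0 | hbpos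
    · have ha1 : a = 1 := by linarith
      simp [← hb0, ha1] at *
      simpa using h1
    have hcomb : a • (p1 - z) + b • (q1 - z) = a • p1 + b • q1 - z := by
      rw [smul_sub, smul_sub, show a • p1 - a • z + (b • q1 - b • z)
          = a • p1 + b • q1 - (a • z + b • z) from by abel, ← add_smul, hab, one_smul]
    have hnorm : ‖a • p1 + b • q1 - z‖ ≤ a * ‖p1 - z‖ + b * ‖q1 - z‖ := by
      rw [← hcomb]
      calc ‖a • (p1 - z) + b • (q1 - z)‖ ≤ ‖a • (p1 - z)‖ + ‖b • (q1 - z)‖ := norm_add_le _ _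
        _ = a * ‖p1 - z‖ + b * ‖q1 - z‖ := by
            rw [norm_smul, norm_smul, Real.norm_of_nonneg ha, Real.norm_of_nonneg hb]
    show a * t1 + b * t2 < r - Kc * ‖a • p1 + b • q1 - z‖
    have e1 : a * t1 < a * (r - Kc * ‖p1 - z‖) := mul_lt_mul_of_pos_left h1 hapos
    have e2 : b * t2 < b * (r - Kc * ‖q1 - z‖) := mul_lt_mul_of_pos_left h2 hbpos
    calc a * t1 + b * t2 < a * (r - Kc * ‖p1 - z‖) + b * (r - Kc * ‖q1 - z‖) := by linarith
      _ = r - Kc * (a * ‖p1 - z‖ + b * ‖q1 - z‖) := by linear_combination r * hab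
      _ ≤ r - Kc * ‖a • p1 + b • q1 - z‖ := by
          have := mul_le_mul_of_nonneg_left hnorm hKc
          linarith
  have hdisj : Disjoint A K := by
    rw [Set.disjoint_left]
    intro p hpA hpK
    have := hslope p hpK
    rw [hA, mem_setOf] at hpA
    linarith
  obtain ⟨f, cc, hfA, hfK⟩ := geometric_hahn_banach_open hAconv hAopen hconv hdisj
  set w : X →L[ℝ] ℝ := f.comp (ContinuousLinearMap.inl ℝ X ℝ) with hwdef
  set aa : ℝ := f (0, 1) with haadef
  have hft : ∀ y : X, ∀ t : ℝ, f (y, t) = w y + t * aa := by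
    intro y t
    have hsplit : ((y, t) : X × ℝ) = ((y, (0:ℝ)) : X × ℝ) + t • (((0:X), (1:ℝ)) : X × ℝ) := by
      simp [Prod.ext_iff]
    rw [hsplit, map_add, map_smul]
    simp [hwdef, haadef, smul_eq_mul]
  have hzA : ∀ τ : ℝ, τ < r → w z + τ * aa < cc := by
    intro τ hτ
    have := hfA (z, τ) (by simp [hA, mem_setOf, hτ])
    rwa [hft] at this
  have haa0 : 0 ≤ aa := by
    by_contra hneg
    push_neg at hneg
    set τ : ℝ := min (r-1) ((cc - w z)/aa) with hτdef
    have h1 : τ < r := lt_of_le_of_lt (min_le_left _ _) (by linarith)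
    have h2 := hzA τ h1
    have h3 : τ ≤ (cc - w z)/aa := min_le_right _ _
    have h4 : cc - w z ≤ τ * aa := by
      rw [le_div_iff_of_neg hneg] at h3
      linarith
    linarith
  have haane : aa ≠ 0 := by
    intro h0
    have hall : ∀ y : X, w y < cc := by
      intro y
      have := hfA (y, r - Kc * ‖y - z‖ - 1) (by rw [hA, mem_setOf]; norm_num)
      rwa [hft, h0, mul_zero, add_zero] at this
    have hw0 : ∀ y, w y ≤ 0 := by
      intro y
      by_contra hpos
      push_neg at hpos
      have := hall ((cc/(w y) + 1) • y)
      rw [map_smul, smul_eq_mul, add_mul, div_mul_cancel₀ _ (ne_of_gt hpos), one_mul] at this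
      linarith
    have hKside := hfK (z, r) hzK
    rw [hft, h0, mul_zero, add_zero] at hKside
    have h00 := hall z
    have h01 := hw0 z
    -- cc ≤ w z ≤ 0 and w z < cc : contradiction
    linarith
  have haapos : 0 < aa := lt_of_le_of_ne haa0 (Ne.symm haane)
  have hkey : w z + r * aa ≤ cc := by
    by_contra hcon
    push_neg at hcon
    set ε : ℝ := (w z + r * aa - cc)/(2*aa) with hεdef
    have hεpos : 0 < ε := by
      apply div_pos
      · linarith
      · linarith
    have := hzA (r - ε) (by linarith)
    have hεaa : ε * aa = (w z + r*aa - cc)/2 := by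
      rw [hεdef]
      field_simp
    nlinarith
  refine ⟨-(aa⁻¹) • w, ?_⟩
  intro p hpK
  have hKside := hfK p hpK
  rw [show p = (p.1, p.2) from rfl, hft] at hKside
  have h5 : w z + r * aa ≤ w p.1 + p.2 * aa := le_trans hkey hKside
  have happ : (-(aa⁻¹) • w) (p.1 - z) = aa⁻¹ * (w z - w p.1) := by
    rw [ContinuousLinearMap.smul_apply, map_sub]
    simp
    ring
  rw [happ]
  have h6 : w z - w p.1 ≤ (p.2 - r) * aa := by nlinarith
  have h7 : aa⁻¹ * (w z - w p.1) ≤ p.2 - r := by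
    rw [inv_mul_le_iff₀ haapos]
    nlinarith
  linarith

end Sandwich


section Key

variable {X : Type*} [NormedAddCommGroup X] [NormedSpace ℝ X] {s : X → EReal}

lemma key_lemma [CompleteSpace X] (hl : LowerSemicontinuous s) (hp : ProperFn s)
    (hc : ConvexFn s) (hh : PosHomFn s) {v : X →L[ℝ] ℝ} {y₀ : X}
    (hy : s y₀ < ((v y₀ : ℝ) : EReal)) :
    ∃ z u, u ∈ sgSet s ∧ s z ≤ ((u z : ℝ) : EReal) ∧ u z < v z := by
  classical
  obtain ⟨u₀, hu₀⟩ := sgSet_nonempty hl hp hc hh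
  set w₀ : X →L[ℝ] ℝ := u₀ - v with hw₀
  set lam : ℝ := ‖w₀‖ + 1 with hlamdef
  have hlam0 : 0 < lam := by positivity
  clear_value lam
  set K : Set (X × ℝ) := {p | s p.1 ≤ ((p.2 + v p.1 : ℝ) : EReal)} with hK
  have hKcl : IsClosed K := by
    have hKpre : K = (fun p : X × ℝ => (p.1, p.2 + v p.1)) ⁻¹' (Epi s) := rfl
    rw [hKpre]
    exact (epi_closed hl).preimage
      (continuous_fst.prodMk (continuous_snd.add (v.continuous.comp continuous_fst)))
  have hKconv : Convex ℝ K := by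
    rintro ⟨p1, t1⟩ h1 ⟨q1, t2⟩ h2 a b ha hb hab
    simp only [hK, mem_setOf] at h1 h2 ⊢
    have hb1 : b = 1 - a := by linarith
    subst hb1
    show s (a • p1 + (1-a) • q1) ≤
      (((a • ((p1,t1) : X × ℝ) + (1-a) • ((q1,t2) : X × ℝ)).2
        + v ((a • ((p1,t1) : X × ℝ) + (1-a) • ((q1,t2) : X × ℝ)).1) : ℝ) : EReal)
    have heq : ((a • ((p1,t1) : X × ℝ) + (1-a) • ((q1,t2) : X × ℝ)).2
        + v ((a • ((p1,t1) : X × ℝ) + (1-a) • ((q1,t2) : X × ℝ)).1) : ℝ)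
        = a * (t1 + v p1) + (1-a) * (t2 + v q1) := by
      simp [Prod.smul_def, smul_eq_mul, map_add, map_smul]
      ring
    rw [heq]
    calc s (a • p1 + (1-a) • q1) ≤ (a : EReal) * s p1 + ((1-a : ℝ) : EReal) * s q1 :=
          hc p1 q1 a ha (by linarith)
      _ ≤ (a : EReal) * (((t1 + v p1 : ℝ)) : EReal)
          + ((1-a : ℝ) : EReal) * (((t2 + v q1 : ℝ)) : EReal) :=
          add_le_add (mul_le_mul_of_nonneg_left h1 (by exact_mod_cast ha))
            (mul_le_mul_of_nonneg_left h2 (by exact_mod_cast hb))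
      _ = ((a * (t1 + v p1) + (1-a) * (t2 + v q1) : ℝ) : EReal) := by norm_cast
  have hKlow : ∀ p ∈ K, w₀ p.1 ≤ p.2 := by
    intro p hp'
    have h1 : ((u₀ p.1 : ℝ) : EReal) ≤ ((p.2 + v p.1 : ℝ) : EReal) := le_trans (hu₀ p.1) hp'
    have h2 := EReal.coe_le_coe_iff.1 h1
    have : w₀ p.1 = u₀ p.1 - v p.1 := by simp [hw₀]
    linarith [this ▸ (by linarith : u₀ p.1 - v p.1 ≤ p.2)]
  have hyne : s y₀ ≠ ⊤ := fun h => absurd hy (by rw [h]; exact not_lt.2 le_top)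
  obtain ⟨ay, hay⟩ := fin_of_ne_top hp hyne
  set t₀ : ℝ := ay - v y₀ with ht₀def
  have ht₀K : ((y₀, t₀) : X × ℝ) ∈ K := by
    rw [hK, mem_setOf, hay]
    show ((ay:ℝ):EReal) ≤ ((t₀ + v y₀ : ℝ):EReal)
    rw [ht₀def]
    norm_num
  have ht₀neg : t₀ < 0 := by
    have hay' : (ay : EReal) < ((v y₀ : ℝ) : EReal) := hay ▸ hy
    have : ay < v y₀ := EReal.coe_lt_coe_iff.1 hay'
    rw [ht₀def]; linarith
  haveI : Nonempty K := ⟨⟨_, ht₀K⟩⟩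
  haveI : CompleteSpace K := hKcl.completeSpace_coe
  set G : K → ℝ := fun p => p.1.2 + lam * ‖p.1.1 - y₀‖ with hGdef
  have hGc : Continuous G := by
    apply Continuous.add
    · exact continuous_snd.comp continuous_subtype_val
    · exact continuous_const.mul
        (((continuous_fst.comp continuous_subtype_val).sub continuous_const).norm)
  have hGlb : ∀ p : K, w₀ y₀ - 1 ≤ G p := by
    rintro ⟨⟨y, t⟩, hyt⟩
    have h1 := hKlow _ hyt
    have h2 : |w₀ (y - y₀)| ≤ ‖w₀‖ * ‖y - y₀‖ := w₀.le_opNorm _ |>.trans_eq' (by rw [Real.norm_eq_abs])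
    have h3 : w₀ y = w₀ y₀ + w₀ (y - y₀) := by rw [map_sub]; ring
    have h4 := abs_le.1 h2
    show t + lam * ‖y - y₀‖ ≥ w₀ y₀ - 1
    have h5 : w₀ y ≤ t := h1
    rw [hlamdef]
    have h6 : (‖w₀‖+1) * ‖y - y₀‖ = ‖w₀‖ * ‖y - y₀‖ + ‖y - y₀‖ := by ring
    linarith [norm_nonneg (y - y₀)]
  obtain ⟨zb, hz1, hz2⟩ := ekeland G hGc (w₀ y₀ - 1) hGlb ⟨(y₀, t₀), ht₀K⟩
  obtain ⟨⟨z, r⟩, hzr⟩ := zb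
  have hzG : G ⟨(z, r), hzr⟩ = r + lam * ‖z - y₀‖ := rfl
  have ht₀G : G ⟨(y₀, t₀), ht₀K⟩ = t₀ := by
    rw [hGdef]; show t₀ + lam * ‖y₀ - y₀‖ = t₀; rw [sub_self, norm_zero]; ring
  rw [hzG, ht₀G] at hz1
  have hrneg : r < 0 := by linarith [mul_nonneg hlam0.le (norm_nonneg (z - y₀))]
  have hslope : ∀ p ∈ K, r - (2*lam+1) * ‖p.1 - z‖ ≤ p.2 := by
    rintro ⟨y, t⟩ hyt
    have h1 := hz2 ⟨(y, t), hyt⟩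
    rw [hzG] at h1
    have h1' : r + lam * ‖z - y₀‖ ≤ (t + lam * ‖y - y₀‖) + (1/2) * dist ((y,t) : X × ℝ) ((z,r) : X × ℝ) := h1
    have hd : dist ((y,t) : X × ℝ) ((z,r) : X × ℝ) ≤ ‖y - z‖ + |t - r| := by
      rw [Prod.dist_eq]
      apply max_le
      · rw [dist_eq_norm]; linarith [abs_nonneg (t - r)]
      · rw [Real.dist_eq]; linarith [norm_nonneg (y - z)]
    have htri : ‖y - y₀‖ ≤ ‖y - z‖ + ‖z - y₀‖ := norm_sub_le_norm_sub_add_norm_sub y z y₀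
    show r - (2*lam+1) * ‖y - z‖ ≤ t
    have h6 : lam * ‖y - y₀‖ ≤ lam * ‖y - z‖ + lam * ‖z - y₀‖ := by
      have := mul_le_mul_of_nonneg_left htri hlam0.le
      rw [mul_add] at this
      exact this
    rcases le_or_gt r t with h | h
    · have h7 : 0 ≤ (2*lam+1) * ‖y - z‖ :=
        mul_nonneg (by linarith) (norm_nonneg _)
      linarith
    · have habs : |t - r| = r - t := by rw [abs_of_neg (by linarith)]; ring
      rw [habs] at hd
      have h8 : (2*lam+1) * ‖y - z‖ = 2*(lam*‖y - z‖) + ‖y - z‖ := by ring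
      have hd2 : (1:ℝ)/2 * dist ((y,t) : X × ℝ) ((z,r) : X × ℝ)
          ≤ 1/2 * (‖y - z‖ + (r - t)) := by linarith
      linarith [h1', hd2, h6, h8]
  obtain ⟨u', hu'⟩ := sandwich hKconv (by linarith : (0:ℝ) ≤ 2*lam+1) hzr hslope
  set u : X →L[ℝ] ℝ := u' + v with hu
  have hzK' : s z ≤ ((r + v z : ℝ) : EReal) := by
    have := hzr
    rw [hK, mem_setOf] at this
    exact this
  have hsubgrad : (z, u) ∈ subdiffGraph s := by
    intro y
    show s z + ((u (y - z) : ℝ) : EReal) ≤ s y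
    rcases eq_or_ne (s y) ⊤ with hy' | hy'
    · rw [hy']; exact le_top
    obtain ⟨b, hb⟩ := fin_of_ne_top hp hy'
    have hyK : ((y, b - v y) : X × ℝ) ∈ K := by
      rw [hK, mem_setOf, hb]
      show ((b:ℝ):EReal) ≤ ((b - v y + v y : ℝ):EReal)
      norm_num
    have h1 := hu' _ hyK
    simp only at h1
    calc s z + ((u (y - z) : ℝ) : EReal)
        ≤ ((r + v z : ℝ) : EReal) + ((u (y - z) : ℝ) : EReal) := add_le_add_left hzK' _
      _ = ((r + v z + u (y - z) : ℝ) : EReal) := by norm_cast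
      _ ≤ ((b : ℝ) : EReal) := by
          rw [EReal.coe_le_coe_iff]
          have h2 : u (y - z) = u' (y - z) + v y - v z := by
            rw [hu]
            simp [map_sub]
            ring
          linarith
      _ = s y := hb.symm
  have hmem := (mem_subdiff_iff hp hc hh).1 hsubgrad
  refine ⟨z, u, hmem.1, hmem.2, ?_⟩
  have h1 : ((u z : ℝ) : EReal) ≤ ((r + v z : ℝ) : EReal) := le_trans (hmem.1 z) hzK'
  have h2 := EReal.coe_le_coe_iff.1 h1
  linarith

end Key


section Assemble

variable {X : Type*} [NormedAddCommGroup X] [NormedSpace ℝ X] {s : X → EReal}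

lemma subdiff_monotone {f : X → EReal} (hp : ProperFn f) : MonotoneGraph (subdiffGraph f) := by
  rintro ⟨x, uu⟩ hx ⟨y, vv⟩ hy
  have hfne : ∀ w : X, ∀ ww : X →L[ℝ] ℝ, (w, ww) ∈ subdiffGraph f → f w ≠ ⊤ := by
    intro w ww hw h
    obtain ⟨x₀, hx₀⟩ := hp.2
    have := hw x₀
    rw [show ((w, ww) : X × (X →L[ℝ] ℝ)).1 = w from rfl, h, EReal.top_add_coe] at this
    exact hx₀ (top_le_iff.1 this)
  obtain ⟨a, ha⟩ := fin_of_ne_top hp (hfne x uu hx)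
  obtain ⟨b, hb⟩ := fin_of_ne_top hp (hfne y vv hy)
  have h1 := hx y
  have h2 := hy x
  rw [show ((x, uu) : X × (X →L[ℝ] ℝ)).1 = x from rfl,
    show ((x, uu) : X × (X →L[ℝ] ℝ)).2 = uu from rfl, ha, hb] at h1
  rw [show ((y, vv) : X × (X →L[ℝ] ℝ)).1 = y from rfl,
    show ((y, vv) : X × (X →L[ℝ] ℝ)).2 = vv from rfl, ha, hb] at h2
  have h1' : a + uu (y - x) ≤ b := by exact_mod_cast h1
  have h2' : b + vv (x - y) ≤ a := by exact_mod_cast h2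
  show 0 ≤ (uu - vv) (x - y)
  rw [ContinuousLinearMap.sub_apply]
  rw [map_sub, map_sub] at *
  linarith

lemma zero_mem_subdiff (hp : ProperFn s) (hc : ConvexFn s) (hh : PosHomFn s)
    {u : X →L[ℝ] ℝ} (hu : u ∈ sgSet s) : ((0:X), u) ∈ subdiffGraph s :=
  (mem_subdiff_iff hp hc hh).2 ⟨hu, by rw [s_zero hp hh]; simp⟩

lemma forward [CompleteSpace X] (hl : LowerSemicontinuous s) (hp : ProperFn s)
    (hc : ConvexFn s) (hh : PosHomFn s) :
    MaximalMonotoneGraph (subdiffGraph s) ∧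
      graphRange (subdiffGraph s) = {u : X →L[ℝ] ℝ | ((0:X), u) ∈ subdiffGraph s} := by
  constructor
  · refine ⟨subdiff_monotone hp, ?_⟩
    intro S hS hsub
    apply Set.Subset.antisymm ?_ hsub
    rintro ⟨x, v⟩ hxv
    have mono : ∀ z u, (z, u) ∈ subdiffGraph s → 0 ≤ (v - u) (x - z) := by
      intro z u hzu
      exact hS _ hxv _ (hsub hzu)
    have hvC : v ∈ sgSet s := by
      by_contra hv
      rw [sgSet, mem_setOf] at hv
      push_neg at hv
      obtain ⟨y₀, hy₀⟩ := hv
      have hy₀' : s y₀ < ((v y₀ : ℝ) : EReal) := hy₀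
      obtain ⟨z, u, huC, hsz, huv⟩ := key_lemma hl hp hc hh hy₀'
      set δ : ℝ := v z - u z with hδ
      have hδpos : 0 < δ := by rw [hδ]; linarith
      have hx0 : 0 ≤ (v - u) x := by
        have := mono 0 u (zero_mem_subdiff hp hc hh huC)
        simpa using this
      set t : ℝ := ((v - u) x)/δ + 1 with htdef
      have ht0 : 0 ≤ t := by
        have : 0 ≤ ((v - u) x)/δ := div_nonneg hx0 hδpos.le
        rw [htdef]; linarith
      have hszt : s z ≠ ⊤ := fun h => by
        rw [h] at hsz; exact (EReal.coe_ne_top _) (top_le_iff.1 hsz)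
      have htz : (t • z, u) ∈ subdiffGraph s := by
        apply (mem_subdiff_iff hp hc hh).2
        refine ⟨huC, ?_⟩
        rw [hh z hszt t ht0]
        have hcz : ((u (t • z) : ℝ) : EReal) = ((t : ℝ) : EReal) * ((u z : ℝ) : EReal) := by
          rw [map_smul, smul_eq_mul, EReal.coe_mul]
        rw [hcz]
        exact mul_le_mul_of_nonneg_left hsz (by exact_mod_cast ht0)
      have hmono := mono _ u htz
      rw [map_sub, map_smul, smul_eq_mul] at hmono
      have hvz : (v - u) z = δ := by rw [hδ]; simp
      rw [hvz] at hmono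
      have htδ : t * δ = (v - u) x + δ := by
        rw [htdef]; field_simp
      linarith
    have hsx : s x ≤ ((v x : ℝ) : EReal) := by
      by_contra hcon
      push_neg at hcon
      obtain ⟨rr, hr1, hr2⟩ := EReal.lt_iff_exists_real_btwn.1 hcon
      obtain ⟨u, huC, hru⟩ := exists_dominated hl hp hc hh hr2
      have hmono := mono 0 u (zero_mem_subdiff hp hc hh huC)
      simp only [sub_zero, ContinuousLinearMap.sub_apply] at hmono
      have : v x < rr := EReal.coe_lt_coe_iff.1 hr1
      linarith
    exact (mem_subdiff_iff hp hc hh).2 ⟨hvC, hsx⟩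
  · ext u
    simp only [graphRange, mem_setOf]
    constructor
    · rintro ⟨x, hx⟩
      exact zero_mem_subdiff hp hc hh ((mem_subdiff_iff hp hc hh).1 hx).1
    · intro h; exact ⟨0, h⟩

lemma backward (T : Set (X × (X →L[ℝ] ℝ))) (hmax : MaximalMonotoneGraph T)
    (hrange : graphRange T = {u : X →L[ℝ] ℝ | ((0:X), u) ∈ T}) :
    ∃ s : X → EReal, LowerSemicontinuous s ∧ ProperFn s ∧ ConvexFn s ∧ PosHomFn s ∧
      T = subdiffGraph s := by
  classical
  have hTne : T.Nonempty := by
    by_contra h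
    rw [not_nonempty_iff_eq_empty] at h
    have h2 := hmax.2 {((0:X), (0 : X →L[ℝ] ℝ))}
      (by rintro p hp q hq; simp only [mem_singleton_iff] at hp hq; subst hp; subst hq; simp)
      (by rw [h]; exact empty_subset _)
    rw [h] at h2
    exact absurd h2 (by simp)
  obtain ⟨⟨xb, ub⟩, hxb⟩ := hTne
  set C : Set (X →L[ℝ] ℝ) := {u | ((0:X), u) ∈ T} with hCdef
  have hCne : C.Nonempty := by
    refine ⟨ub, ?_⟩
    have : ub ∈ graphRange T := ⟨xb, hxb⟩
    rw [hrange] at this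
    exact this
  obtain ⟨u₀, hu₀⟩ := hCne
  set s : X → EReal := fun x => ⨆ u ∈ C, ((u x : ℝ) : EReal) with hsdef
  have hlow : ∀ x, ∀ u ∈ C, ((u x : ℝ) : EReal) ≤ s x := fun x u hu =>
    le_iSup₂ (f := fun (u : X →L[ℝ] ℝ) (_ : u ∈ C) => ((u x : ℝ) : EReal)) u hu
  have hub : ∀ (x : X) (b : EReal), (∀ u ∈ C, ((u x : ℝ) : EReal) ≤ b) → s x ≤ b :=
    fun x b h => iSup₂_le h
  have hlsc : LowerSemicontinuous s :=
    lowerSemicontinuous_biSup fun u _ =>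
      (continuous_coe_real_ereal.comp u.continuous).lowerSemicontinuous
  have hproper : ProperFn s := by
    constructor
    · intro x h
      have := hlow x u₀ hu₀
      rw [h] at this
      exact (EReal.coe_ne_bot _) (le_bot_iff.1 this)
    · refine ⟨0, ?_⟩
      have : s 0 ≤ (0 : EReal) := hub 0 0 (fun u _ => by simp)
      exact fun h => by rw [h] at this; exact absurd this (by simp)
  have hconv : ConvexFn s := by
    intro x y t ht0 ht1
    apply hub
    intro u hu
    have heq : ((u (t • x + (1-t) • y) : ℝ) : EReal)
        = ((t : ℝ) : EReal) * ((u x : ℝ) : EReal)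
          + (((1-t) : ℝ) : EReal) * ((u y : ℝ) : EReal) := by
      rw [map_add, map_smul, map_smul, smul_eq_mul, smul_eq_mul]
      norm_cast
    rw [heq]
    exact add_le_add (mul_le_mul_of_nonneg_left (hlow x u hu) (by exact_mod_cast ht0))
      (mul_le_mul_of_nonneg_left (hlow y u hu) (by exact_mod_cast (by linarith : (0:ℝ) ≤ 1 - t)))
  have haux : ∀ (c : ℝ), 0 ≤ c → ∀ x : X, s (c • x) ≤ ((c : ℝ) : EReal) * s x := by
    intro c hc x
    apply hub
    intro u hu
    have heq : ((u (c • x) : ℝ) : EReal) = ((c : ℝ) : EReal) * ((u x : ℝ) : EReal) := by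
      rw [map_smul, smul_eq_mul, EReal.coe_mul]
    rw [heq]
    exact mul_le_mul_of_nonneg_left (hlow x u hu) (by exact_mod_cast hc)
  have hs0 : s 0 = 0 := by
    apply le_antisymm (hub 0 0 (fun u _ => by simp))
    have := hlow 0 u₀ hu₀
    simpa using this
  have hposhom : PosHomFn s := by
    intro x _ c hc
    rcases eq_or_lt_of_le hc with h0 | hpos
    · rw [← h0]
      simp only [zero_smul, EReal.coe_zero, zero_mul]
      exact hs0
    apply le_antisymm (haux c hc x)
    have h1 : s x ≤ ((c⁻¹ : ℝ) : EReal) * s (c • x) := by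
      have := haux c⁻¹ (by positivity) (c • x)
      rwa [smul_smul, inv_mul_cancel₀ (ne_of_gt hpos), one_smul] at this
    calc ((c:ℝ) : EReal) * s x ≤ ((c:ℝ):EReal) * (((c⁻¹ : ℝ) : EReal) * s (c • x)) :=
          mul_le_mul_of_nonneg_left h1 (by exact_mod_cast hc)
      _ = s (c • x) := by
          rw [← mul_assoc, ← EReal.coe_mul, mul_inv_cancel₀ (ne_of_gt hpos)]
          simp
  have hTsub : T ⊆ subdiffGraph s := by
    rintro ⟨x, w⟩ hxw
    have hwC : w ∈ C := by
      have : w ∈ graphRange T := ⟨x, hxw⟩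
      rw [hrange] at this
      exact this
    have hle : ∀ u ∈ C, u x ≤ w x := by
      intro u hu
      have hm := hmax.1 (x, w) hxw (0, u) hu
      simp only [ContinuousLinearMap.sub_apply, sub_zero] at hm
      linarith
    have hsx_le : s x ≤ ((w x : ℝ) : EReal) :=
      hub x _ (fun u hu => EReal.coe_le_coe_iff.2 (hle u hu))
    intro y
    show s x + ((w (y - x) : ℝ) : EReal) ≤ s y
    calc s x + ((w (y - x) : ℝ) : EReal)
        ≤ ((w x : ℝ) : EReal) + ((w (y - x) : ℝ) : EReal) := add_le_add_left hsx_le _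
      _ = ((w y : ℝ) : EReal) := by rw [← EReal.coe_add]; norm_cast; rw [map_sub]; ring
      _ ≤ s y := hlow y w hwC
  have hfin := hmax.2 (subdiffGraph s) (subdiff_monotone hproper) hTsub
  exact ⟨s, hlsc, hproper, hconv, hposhom, hfin.symm⟩

end Assemble



/-- `T` is the subdifferential operator of some l.s.c. proper sublinear
functional iff `T` is maximally monotone and `range T = T(0)`. -/
theorem subdiff_sublinear_iff_maximalMonotone_and_rangeEqAtZero
    {X : Type*} [NormedAddCommGroup X] [NormedSpace ℝ X] [CompleteSpace X]
    (T : Set (X × (X →L[ℝ] ℝ))) :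
    (∃ s : X → EReal, LowerSemicontinuous s ∧ ProperFn s ∧ ConvexFn s ∧ PosHomFn s ∧
        T = subdiffGraph s) ↔
      (MaximalMonotoneGraph T ∧ graphRange T = {u : X →L[ℝ] ℝ | ((0 : X), u) ∈ T}) := by
  
  constructor
  · rintro ⟨s, hl, hp, hc, hh, rfl⟩
    exact forward hl hp hc hh
  · rintro ⟨hmax, hrange⟩
    exact backward T hmax hrange
end
end
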